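/- Suppose nonnegative reals R_0, R_1, ..., R_N with R_0 = 0 satisfy R_n ≤ R_{n-1} + Qτ(R_{n-1} + R_n) + Qτ² Σ_{m=1}^{n-1} R_m + Qτ² for all 1 ≤ n ≤ N, where Q > 0, τ > 0, Nτ = T. Then for τ sufficiently small (e.g. Qτ ≤ 1/2), there is a constant C depending only on Q and T such that R_n ≤ Cτ for all 1 ≤ n ≤ N. -/

import Mathlib

open Finset

theorem stmt6 (Q T : ℝ) (hQ : 0 < Q) (hT : 0 < T) :
    ∃ C : ℝ, ∀ (N : ℕ) (τ : ℝ) (R : ℕ → ℝ),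
      0 < τ → (N : ℝ) * τ = T → Q * τ ≤ 1 / 2 →
      R 0 = 0 → (∀ n, 0 ≤ R n) →
      (∀ n : ℕ, 1 ≤ n → n ≤ N →
        R n ≤ R (n - 1) + Q * τ * (R (n - 1) + R n)
          + Q * τ ^ 2 * ∑ m ∈ Ico 1 n, R m + Q * τ ^ 2) →
      ∀ n : ℕ, 1 ≤ n → n ≤ N → R n ≤ C * τ := by
  set a : ℝ := 6 * Q + 1 with ha
  refine ⟨Real.exp (a * T), ?_⟩
  intro N τ R hτ hNτ hQτ hR0 hRpos hrec
  have ha1 : (1 : ℝ) ≤ a := by nlinarith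
  have ha0 : (0 : ℝ) < a := by linarith
  have haτ : 0 < a * τ := by positivity
  set P : ℝ := 1 + a * τ with hP
  have hP1 : 1 < P := by rw [hP]; linarith
  have hP0 : 0 < P := by linarith
  set u : ℝ := Q * τ / a with hu
  have hu0 : 0 ≤ u := by positivity
  have hua : u * a = Q * τ := by rw [hu]; exact div_mul_cancel₀ _ ha0.ne'
  have huQ : u ≤ Q * τ := by
    rw [hu]
    calc Q * τ / a ≤ Q * τ / 1 := by
          apply div_le_div_of_nonneg_left (by positivity) one_pos ha1
      _ = Q * τ := by ring
  -- key induction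
  have key : ∀ n, n ≤ N → R n ≤ τ * (P ^ n - 1) := by
    intro n
    induction n using Nat.strong_induction_on with
    | _ n ih =>
      intro hnN
      match n with
      | 0 => simp [hR0]
      | (k+1) =>
        have hrec' := hrec (k+1) (by omega) hnN
        simp only [Nat.add_sub_cancel] at hrec'
        have hY : (1:ℝ) ≤ P ^ (k+1) := one_le_pow₀ hP1.le
        have hSum : Q * τ ^ 2 * ∑ m ∈ Ico 1 (k+1), R m ≤ u * τ * (P ^ (k+1) - 1) := by
          have h1 : ∑ m ∈ Ico 1 (k+1), R m ≤ ∑ m ∈ Ico 1 (k+1), τ * P ^ m := by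
            apply Finset.sum_le_sum
            intro m hm
            simp only [Finset.mem_Ico] at hm
            have h2 := ih m hm.2 (by omega)
            linarith [h2, hτ.le]
          have hgeom : ∑ i ∈ Finset.range (k+1), P ^ i = (P ^ (k+1) - 1) / (P - 1) :=
            geom_sum_eq (by linarith) _
          have hsplit : ∑ i ∈ Finset.range (k+1), P ^ i
              = P ^ 0 + ∑ i ∈ Ico 1 (k+1), P ^ i := by
            rw [Finset.range_eq_Ico]
            exact Finset.sum_eq_sum_Ico_succ_bot (by omega) _
          have hPm1 : P - 1 = a * τ := by rw [hP]; ring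
          have hval : ∑ i ∈ Ico 1 (k+1), P ^ i = (P ^ (k+1) - 1) / (a * τ) - 1 := by
            rw [← hPm1, ← hgeom, hsplit]; ring
          have h3 : ∑ m ∈ Ico 1 (k+1), R m ≤ τ * ((P ^ (k+1) - 1) / (a * τ) - 1) := by
            rw [← Finset.mul_sum, hval] at h1; exact h1
          have h4 : Q * τ ^ 2 * ∑ m ∈ Ico 1 (k+1), R m
              ≤ Q * τ ^ 2 * (τ * ((P ^ (k+1) - 1) / (a * τ) - 1)) :=
            mul_le_mul_of_nonneg_left h3 (by positivity)
          have h5 : Q * τ ^ 2 * (τ * ((P ^ (k+1) - 1) / (a * τ) - 1))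
              = u * τ * (P ^ (k+1) - 1) - Q * τ ^ 3 := by
            rw [hu]; field_simp
          linarith [h4, h5, mul_pos hQ (pow_pos hτ 3)]
        have hRk : R k ≤ τ * (P ^ k - 1) := ih k (by omega) (by omega)
        have hX : (1 : ℝ) ≤ P ^ k := one_le_pow₀ hP1.le
        have hPk1 : P ^ (k+1) = P * P ^ k := by ring
        have hRn := hRpos (k+1)
        have hRk0 := hRpos k
        -- main algebraic step
        have h6 : u * (6 * Q + 1) = Q * τ := by rw [← ha]; exact hua
        have hmain : ∀ X : ℝ, 1 ≤ X →
            (1 + Q * τ) * (τ * (X - 1)) + u * τ * (P * X - 1) + Q * τ ^ 2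
              ≤ (1 - Q * τ) * (τ * (P * X - 1)) := by
          intro X hX1
          have hX0 : (0:ℝ) ≤ X := by linarith
          have hhalf : (0:ℝ) ≤ 1/2 - Q * τ := by linarith
          have e1 : 0 ≤ τ * (X * ((6 * Q + 1) * τ * (1/2 - Q * τ))) := by positivity
          have e2 : 0 ≤ τ * (X * (Q * τ - u)) :=
            mul_nonneg hτ.le (mul_nonneg hX0 (by linarith))
          have e3 : 0 ≤ τ * (X * (τ * (1/2 - Q * τ))) := by positivity
          have e4 : 0 ≤ τ * (Q * τ + u) := by positivity
          have e5 : u * (6 * Q + 1) * τ ^ 2 * X = Q * τ ^ 3 * X := by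
            linear_combination τ ^ 2 * X * h6
          rw [hP, ha]
          linarith [e1, e2, e3, e4, e5]
        have hmain' := hmain (P ^ k) hX
        have hRk' : (1 + Q * τ) * R k ≤ (1 + Q * τ) * (τ * (P ^ k - 1)) :=
          mul_le_mul_of_nonneg_left hRk (by linarith)
        have hstep : (1 - Q * τ) * R (k+1) ≤ (1 - Q * τ) * (τ * (P ^ (k+1) - 1)) := by
          rw [hPk1] at hSum ⊢
          linarith [hrec', hRk', hSum, hmain']
        have h12 : (0:ℝ) < 1 - Q * τ := by linarith
        exact le_of_mul_le_mul_left hstep h12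
  intro n hn1 hnN
  have hkey := key n hnN
  have hPn : P ^ n ≤ Real.exp (a * T) := by
    have h1 : P ≤ Real.exp (a * τ) := by
      have := Real.add_one_le_exp (a * τ); rw [hP]; linarith
    calc P ^ n ≤ Real.exp (a * τ) ^ n := pow_le_pow_left₀ hP0.le h1 n
      _ = Real.exp (n * (a * τ)) := by rw [← Real.exp_nat_mul]
      _ ≤ Real.exp (a * T) := by
          apply Real.exp_le_exp.mpr
          have hnτ : (n : ℝ) * τ ≤ T := by
            rw [← hNτ]
            exact mul_le_mul_of_nonneg_right (by exact_mod_cast hnN) hτ.le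
          calc (n:ℝ) * (a * τ) = a * ((n:ℝ) * τ) := by ring
            _ ≤ a * T := mul_le_mul_of_nonneg_left hnτ ha0.le
  have h2 : τ * (P ^ n - 1) ≤ τ * (Real.exp (a * T) - 1) :=
    mul_le_mul_of_nonneg_left (by linarith) hτ.le
  calc R n ≤ τ * (P ^ n - 1) := hkey
    _ ≤ Real.exp (a * T) * τ := by linarith [h2, hτ.le]
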